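/- arXiv:1310.0103 — 3 statements merged into one kernel-verified Lean document; each statement's English description precedes it below -/
import Mathlib

section
/- Let c_{-1} = 0, c_0 = 1, and define c_k ∈ ℚ(q) recursively by c_k = (-q^{k-1})(q^{-1} - q)(q^{-1}[k-1] c_{k-2} + c_{k-1}) for k ≥ 1, where [n] = (q^n - q^{-n})/(q - q^{-1}). Then c_k ∈ ℤ[q, q^{-1}] for all k ≥ 0. -/
/-- The indeterminate `q`, realized as `X` in the field of rational functions `ℚ(q)`. -/
noncomputable def q0 : RatFunc ℚ := RatFunc.X

/-- The balanced quantum integer `[n] = (q^n - q^{-n})/(q - q^{-1})`. -/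
noncomputable def qint (n : ℤ) : RatFunc ℚ := (q0 ^ n - q0 ^ (-n)) / (q0 - q0⁻¹)

lemma q0_ne_zero : q0 ≠ 0 := RatFunc.X_ne_zero

lemma q0_sub_inv_ne_zero : q0 - q0⁻¹ ≠ 0 := by
  intro h
  have h1 : q0 = q0⁻¹ := sub_eq_zero.mp h
  have h2 : q0 * q0 = 1 := by
    calc q0 * q0 = q0 * q0⁻¹ := by rw [← h1]
    _ = 1 := mul_inv_cancel₀ q0_ne_zero
  have h3 : (Polynomial.X : Polynomial ℚ) * Polynomial.X = 1 := by
    apply RatFunc.algebraMap_injective ℚ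
    simpa [q0, RatFunc.algebraMap_X, map_mul] using h2
  have := congrArg (Polynomial.coeff · 2) h3
  simp [Polynomial.coeff_X_mul, Polynomial.coeff_one] at this

lemma zpow_mem_closure (n : ℤ) : q0 ^ n ∈ Subring.closure {q0, q0⁻¹} := by
  have hq : q0 ∈ Subring.closure {q0, q0⁻¹} := Subring.subset_closure (Or.inl rfl)
  have hqi : q0⁻¹ ∈ Subring.closure {q0, q0⁻¹} := Subring.subset_closure (Or.inr rfl)
  obtain ⟨m, rfl | rfl⟩ := Int.eq_nat_or_neg n
  · rw [zpow_natCast]; exact pow_mem hq m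
  · rw [zpow_neg, ← inv_zpow, zpow_natCast]; exact pow_mem hqi m

lemma qint_succ (n : ℤ) : qint (n + 1) = q0 * qint n + q0 ^ (-n) := by
  have h1 : q0 ^ (n + 1) - q0 ^ (-(n + 1))
      = q0 * (q0 ^ n - q0 ^ (-n)) + q0 ^ (-n) * (q0 - q0⁻¹) := by
    rw [zpow_add_one₀ q0_ne_zero, show -(n + 1) = -n - 1 by ring,
      zpow_sub_one₀ q0_ne_zero]
    ring
  rw [qint, qint, h1, add_div, mul_div_assoc, mul_div_cancel_right₀ _ q0_sub_inv_ne_zero]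

lemma qint_mem (n : ℕ) : qint n ∈ Subring.closure {q0, q0⁻¹} := by
  induction n with
  | zero =>
      simp only [qint, Nat.cast_zero, neg_zero, zpow_zero, sub_self, zero_div]
      exact zero_mem _
  | succ m ih =>
      have : ((m : ℤ) + 1) = ((m + 1 : ℕ) : ℤ) := by push_cast; ring
      rw [← this, qint_succ]
      exact add_mem (mul_mem (Subring.subset_closure (Or.inl rfl)) ih)
        (zpow_mem_closure (-(m : ℤ)))

lemma qint_mem' (n : ℤ) (hn : 0 ≤ n) : qint n ∈ Subring.closure {q0, q0⁻¹} := by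
  have : n = (n.toNat : ℤ) := (Int.toNat_of_nonneg hn).symm
  rw [this]; exact qint_mem n.toNat

/-- With `c_{-1} = 0`, `c_0 = 1` and
`c_k = (-q^{k-1})(q^{-1}-q)(q^{-1}[k-1]c_{k-2} + c_{k-1})` for `k ≥ 1`,
every `c_k` for `k ≥ 0` lies in `ℤ[q, q^{-1}]`, i.e. in the subring of `ℚ(q)` generated by
`q` and `q⁻¹`. -/
theorem stmt0 (c : ℤ → RatFunc ℚ)
    (hm1 : c (-1) = 0) (h0 : c 0 = 1)
    (hrec : ∀ k : ℤ, 1 ≤ k →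
      c k = (-(q0 ^ (k - 1))) * (q0⁻¹ - q0) * (q0⁻¹ * qint (k - 1) * c (k - 2) + c (k - 1))) :
    ∀ k : ℤ, 0 ≤ k → c k ∈ Subring.closure {q0, q0⁻¹} := by
  set S := Subring.closure {q0, q0⁻¹} with hS
  have hq : q0 ∈ S := Subring.subset_closure (Or.inl rfl)
  have hqi : q0⁻¹ ∈ S := Subring.subset_closure (Or.inr rfl)
  have key : ∀ k : ℤ, 0 ≤ k → c (k - 1) ∈ S ∧ c k ∈ S := by
    refine fun k hk => Int.le_induction (motive := fun n _ => c (n - 1) ∈ S ∧ c n ∈ S) ?_ ?_ k hk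
    · refine ⟨?_, ?_⟩
      · rw [show (0:ℤ) - 1 = -1 by ring, hm1]; exact zero_mem S
      · rw [h0]; exact one_mem S
    · intro k hk ih
      refine ⟨by simpa using ih.2, ?_⟩
      have hr := hrec (k + 1) (by omega)
      rw [show (k + 1 : ℤ) - 2 = k - 1 by ring, show (k + 1 : ℤ) - 1 = k by ring] at hr
      rw [hr]
      exact mul_mem (mul_mem (neg_mem (zpow_mem_closure k)) (sub_mem hqi hq))
        (add_mem (mul_mem (mul_mem hqi (qint_mem' k hk)) ih.1) ih.2)
  exact fun k hk => (key k hk).2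
end

section
/- Let Λ be the free abelian group on {ε_a} with (ε_a, ε_b) = δ_{ab}, indices a ∈ {±1/2, …, ±(r+1/2)}, simple roots α_i = ε_{i-1/2} - ε_{i+1/2} for -r ≤ i ≤ r. Then there exists a function ζ: Λ → ℚ(q)^× such that ζ(μ + α_0) = -q ζ(μ) and ζ(μ + α_i) = -q^{(α_i, μ+α_i) - (α_{-i}, μ)} ζ(μ) for all μ ∈ Λ and all i with 0 < |i| ≤ r. -/
/- We index the basis `{ε_a : a ∈ J}`, `J = {±1/2, …, ±(r+1/2)}`, by the nonzero integers `j`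
with `|j| ≤ r+1` via `a ↦ a + 1/2` for `a > 0` and `a ↦ a - 1/2` for `a < 0`.  Under this
relabelling, `α_i = ε_{i-1/2} - ε_{i+1/2}` becomes `e_i - e_{i+1}` for `i > 0`,
`e_{i-1} - e_i` for `i < 0`, and `α_0 = ε_{-1/2} - ε_{1/2}` becomes `e_{-1} - e_1`;
the bilinear form `(ε_a, ε_b) = δ_{ab}` becomes `(e_j, e_k) = δ_{jk}`. -/

/-- The index set for the basis of `Λ`. -/
abbrev JIdx (r : ℕ) := {j : ℤ // j ≠ 0 ∧ -(r + 1 : ℤ) ≤ j ∧ j ≤ (r : ℤ) + 1}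

/-- The basis vector `e_j` of `Λ` (and `0` for an out-of-range label). -/
noncomputable def eJ (r : ℕ) (j : ℤ) : JIdx r →₀ ℤ :=
  if h : j ≠ 0 ∧ -(r + 1 : ℤ) ≤ j ∧ j ≤ (r : ℤ) + 1 then Finsupp.single ⟨j, h⟩ 1 else 0

/-- The standard symmetric bilinear form on `Λ`. -/
def BJ (r : ℕ) (f g : JIdx r →₀ ℤ) : ℤ := f.sum fun a m => m * g a

/-- The simple root `α_i = ε_{i-1/2} - ε_{i+1/2}`, for `-r ≤ i ≤ r`. -/
noncomputable def alphaB (r : ℕ) (i : ℤ) : JIdx r →₀ ℤ :=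
  if 0 < i then eJ r i - eJ r (i + 1)
  else if i < 0 then eJ r (i - 1) - eJ r i
  else eJ r (-1) - eJ r 1

namespace Stmt11

noncomputable instance instFin (r : ℕ) : Fintype (JIdx r) :=
  Fintype.subtype ((Finset.Icc (-(r + 1) : ℤ) ((r : ℤ) + 1)).filter (· ≠ 0))
    (by intro x; simp [Finset.mem_Icc]; omega)

def negE (r : ℕ) : JIdx r ≃ JIdx r where
  toFun a := ⟨-a.1, by obtain ⟨h1, h2, h3⟩ := a.2; exact ⟨by omega, by omega, by omega⟩⟩
  invFun a := ⟨-a.1, by obtain ⟨h1, h2, h3⟩ := a.2; exact ⟨by omega, by omega, by omega⟩⟩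
  left_inv a := Subtype.ext (neg_neg _)
  right_inv a := Subtype.ext (neg_neg _)

@[simp] lemma negE_val (r : ℕ) (a : JIdx r) : (negE r a).1 = -a.1 := rfl

@[simp] lemma negE_negE (r : ℕ) (a : JIdx r) : negE r (negE r a) = a := Subtype.ext (neg_neg _)

def cL (r : ℕ) (a : JIdx r) : ℤ := if 0 < a.1 then -a.1 else -a.1 - 1

lemma cL_mk (r : ℕ) (j : ℤ) (h : j ≠ 0 ∧ -(r + 1 : ℤ) ≤ j ∧ j ≤ (r : ℤ) + 1) :
    cL r ⟨j, h⟩ = if 0 < j then -j else -j - 1 := rfl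

noncomputable def sexp (r : ℕ) (μ : JIdx r →₀ ℤ) : ℤ := ∑ a, μ a * cL r a

noncomputable def fexp (r : ℕ) (μ : JIdx r →₀ ℤ) : ℤ :=
  (∑ a, (μ a * (μ a - 1) / 2 + μ a * cL r a))
    + ∑ a, (if 0 < a.1 then μ a * μ (negE r a) else 0)

noncomputable def zetaF (r : ℕ) (μ : JIdx r →₀ ℤ) : RatFunc ℚ :=
  (-1 : RatFunc ℚ) ^ (sexp r μ) * (RatFunc.X : RatFunc ℚ) ^ (fexp r μ)

lemma half_add (m n : ℤ) :
    (m + n) * (m + n - 1) / 2 = m * (m - 1) / 2 + n * m + n * (n - 1) / 2 := by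
  obtain ⟨a, ha⟩ := Int.even_mul_pred_self m
  obtain ⟨b, hb⟩ := Int.even_mul_pred_self n
  have h3 : (m + n) * (m + n - 1) = m * (m - 1) + 2 * (n * m) + n * (n - 1) := by ring
  omega

lemma sexp_add (r : ℕ) (μ ν : JIdx r →₀ ℤ) : sexp r (μ + ν) = sexp r μ + sexp r ν := by
  unfold sexp
  rw [← Finset.sum_add_distrib]
  exact Finset.sum_congr rfl fun a _ => by simp [Finsupp.add_apply]; ring

lemma cross_key (r : ℕ) (μ ν : JIdx r →₀ ℤ) :
    (∑ a, (if 0 < a.1 then ν a * μ (negE r a) else 0))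
      = ∑ a, (if ¬ 0 < a.1 then ν (negE r a) * μ a else 0) := by
  apply Fintype.sum_equiv (negE r)
  intro a
  have h : (0 : ℤ) < -a.1 ↔ ¬ 0 < a.1 := by have := a.2.1; omega
  simp only [negE_negE, negE_val, h, not_not]

lemma fexp_add (r : ℕ) (μ ν : JIdx r →₀ ℤ) :
    fexp r (μ + ν) = fexp r μ + fexp r ν + (∑ a, ν a * μ a) + ∑ a, ν (negE r a) * μ a := by
  unfold fexp
  have h1 : (∑ a, ((μ + ν) a * ((μ + ν) a - 1) / 2 + (μ + ν) a * cL r a))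
      = (∑ a, (μ a * (μ a - 1) / 2 + μ a * cL r a))
        + ((∑ a, (ν a * (ν a - 1) / 2 + ν a * cL r a)) + ∑ a, ν a * μ a) := by
    rw [← Finset.sum_add_distrib, ← Finset.sum_add_distrib]
    refine Finset.sum_congr rfl fun a _ => ?_
    rw [Finsupp.add_apply, half_add]
    ring
  have h2 : (∑ a, (if 0 < a.1 then (μ + ν) a * ((μ + ν) (negE r a)) else 0))
      = (∑ a, (if 0 < a.1 then μ a * μ (negE r a) else 0))
        + ((∑ a, (if 0 < a.1 then ν a * ν (negE r a) else 0)) + ∑ a, ν (negE r a) * μ a) := by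
    have expand : ∀ a : JIdx r,
        (if 0 < a.1 then (μ + ν) a * ((μ + ν) (negE r a)) else 0)
          = (if 0 < a.1 then μ a * μ (negE r a) else 0)
            + (if 0 < a.1 then ν a * ν (negE r a) else 0)
            + (if 0 < a.1 then μ a * ν (negE r a) else 0)
            + (if 0 < a.1 then ν a * μ (negE r a) else 0) := by
      intro a
      by_cases h : 0 < a.1 <;> simp [h, Finsupp.add_apply] <;> ring
    calc (∑ a, (if 0 < a.1 then (μ + ν) a * ((μ + ν) (negE r a)) else 0))
        = (∑ a, (if 0 < a.1 then μ a * μ (negE r a) else 0))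
          + (∑ a, (if 0 < a.1 then ν a * ν (negE r a) else 0))
          + (∑ a, (if 0 < a.1 then μ a * ν (negE r a) else 0))
          + (∑ a, (if 0 < a.1 then ν a * μ (negE r a) else 0)) := by
            rw [← Finset.sum_add_distrib, ← Finset.sum_add_distrib, ← Finset.sum_add_distrib]
            exact Finset.sum_congr rfl fun a _ => expand a
      _ = _ := by
            rw [cross_key r μ ν]
            have : (∑ a, (if 0 < a.1 then μ a * ν (negE r a) else 0))
                + (∑ a, (if ¬ 0 < a.1 then ν (negE r a) * μ a else 0))
                = ∑ a, ν (negE r a) * μ a := by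
              rw [← Finset.sum_add_distrib]
              refine Finset.sum_congr rfl fun a _ => ?_
              by_cases h : 0 < a.1 <;> simp [h] <;> ring
            linarith [this]
  rw [h1, h2]
  ring

lemma zetaF_delta (r : ℕ) (μ ν : JIdx r →₀ ℤ) :
    zetaF r (μ + ν)
      = ((-1 : RatFunc ℚ) ^ (sexp r ν)
          * (RatFunc.X : RatFunc ℚ) ^ (fexp r ν + (∑ a, ν a * μ a) + ∑ a, ν (negE r a) * μ a))
        * zetaF r μ := by
  unfold zetaF
  rw [sexp_add, fexp_add,
    show sexp r μ + sexp r ν = sexp r ν + sexp r μ by ring,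
    show fexp r μ + fexp r ν + (∑ a, ν a * μ a) + (∑ a, ν (negE r a) * μ a)
      = (fexp r ν + (∑ a, ν a * μ a) + ∑ a, ν (negE r a) * μ a) + fexp r μ by ring,
    zpow_add₀ (by norm_num : (-1 : RatFunc ℚ) ≠ 0),
    zpow_add₀ (RatFunc.X_ne_zero : (RatFunc.X : RatFunc ℚ) ≠ 0)]
  ring

lemma sum_single_mul (r : ℕ) (b : JIdx r) (c : ℤ) (g : JIdx r → ℤ) :
    (∑ a, (Finsupp.single b c : JIdx r →₀ ℤ) a * g a) = c * g b := by
  have : ∀ a : JIdx r, (Finsupp.single b c : JIdx r →₀ ℤ) a * g a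
      = if a = b then c * g a else 0 := by
    intro a
    rw [Finsupp.single_apply]
    by_cases h : b = a
    · subst h; simp
    · rw [if_neg h, if_neg (fun hh => h hh.symm), zero_mul]
  rw [Finset.sum_congr rfl fun a _ => this a, Finset.sum_ite_eq' Finset.univ b fun a => c * g a,
    if_pos (Finset.mem_univ b)]

lemma sum_single_negE_mul (r : ℕ) (b : JIdx r) (c : ℤ) (g : JIdx r → ℤ) :
    (∑ a, (Finsupp.single b c : JIdx r →₀ ℤ) (negE r a) * g a) = c * g (negE r b) := by
  have : ∀ a : JIdx r, (Finsupp.single b c : JIdx r →₀ ℤ) (negE r a) * g a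
      = if a = negE r b then c * g a else 0 := by
    intro a
    rw [Finsupp.single_apply]
    by_cases h : a = negE r b
    · subst h; simp
    · have h2 : b ≠ negE r a := by
        intro hh; apply h; rw [hh, negE_negE]
      rw [if_neg h2, if_neg h, zero_mul]
  rw [Finset.sum_congr rfl fun a _ => this a,
    Finset.sum_ite_eq' Finset.univ (negE r b) fun a => c * g a,
    if_pos (Finset.mem_univ _)]

/-- the pair `e_b - e_b'`. -/
noncomputable def pr (r : ℕ) (b b' : JIdx r) : JIdx r →₀ ℤ :=
  Finsupp.single b 1 - Finsupp.single b' 1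

lemma sum_pr_mul (r : ℕ) (b b' : JIdx r) (g : JIdx r → ℤ) :
    (∑ a, pr r b b' a * g a) = g b - g b' := by
  have : ∀ a : JIdx r, pr r b b' a * g a
      = (Finsupp.single b 1 : JIdx r →₀ ℤ) a * g a
        - (Finsupp.single b' 1 : JIdx r →₀ ℤ) a * g a := by
    intro a; rw [pr, Finsupp.sub_apply, sub_mul]
  rw [Finset.sum_congr rfl fun a _ => this a, Finset.sum_sub_distrib,
    sum_single_mul, sum_single_mul, one_mul, one_mul]

lemma sum_pr_negE_mul (r : ℕ) (b b' : JIdx r) (g : JIdx r → ℤ) :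
    (∑ a, pr r b b' (negE r a) * g a) = g (negE r b) - g (negE r b') := by
  have : ∀ a : JIdx r, pr r b b' (negE r a) * g a
      = (Finsupp.single b 1 : JIdx r →₀ ℤ) (negE r a) * g a
        - (Finsupp.single b' 1 : JIdx r →₀ ℤ) (negE r a) * g a := by
    intro a; rw [pr, Finsupp.sub_apply, sub_mul]
  rw [Finset.sum_congr rfl fun a _ => this a, Finset.sum_sub_distrib,
    sum_single_negE_mul, sum_single_negE_mul, one_mul, one_mul]

@[simp] lemma pr_apply_self (r : ℕ) (b b' : JIdx r) (h : b ≠ b') : pr r b b' b = 1 := by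
  have h' : b' ≠ b := Ne.symm h
  simp [pr, Finsupp.single_apply, h']

lemma sexp_single (r : ℕ) (b : JIdx r) (c : ℤ) :
    sexp r (Finsupp.single b c) = c * cL r b := by
  unfold sexp; rw [sum_single_mul]

lemma fexp_single (r : ℕ) (b : JIdx r) (c : ℤ) :
    fexp r (Finsupp.single b c) = c * (c - 1) / 2 + c * cL r b := by
  unfold fexp
  have h1 : (∑ a, ((Finsupp.single b c : JIdx r →₀ ℤ) a * ((Finsupp.single b c : JIdx r →₀ ℤ) a - 1) / 2
        + (Finsupp.single b c : JIdx r →₀ ℤ) a * cL r a))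
      = c * (c - 1) / 2 + c * cL r b := by
    have : ∀ a : JIdx r, ((Finsupp.single b c : JIdx r →₀ ℤ) a * ((Finsupp.single b c : JIdx r →₀ ℤ) a - 1) / 2
        + (Finsupp.single b c : JIdx r →₀ ℤ) a * cL r a)
        = if a = b then c * (c - 1) / 2 + c * cL r a else 0 := by
      intro a
      rw [Finsupp.single_apply]
      by_cases h : b = a
      · subst h; simp
      · rw [if_neg h, if_neg (fun hh => h hh.symm)]; norm_num
    rw [Finset.sum_congr rfl fun a _ => this a,
      Finset.sum_ite_eq' Finset.univ b fun a => c * (c - 1) / 2 + c * cL r a,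
      if_pos (Finset.mem_univ b)]
  have h2 : (∑ a, (if 0 < a.1 then (Finsupp.single b c : JIdx r →₀ ℤ) a
        * ((Finsupp.single b c : JIdx r →₀ ℤ) (negE r a)) else 0)) = 0 := by
    apply Finset.sum_eq_zero
    intro a _
    split
    · rw [Finsupp.single_apply, Finsupp.single_apply]
      by_cases h : b = a
      · subst h
        have : b ≠ negE r b := by
          intro hh
          have := congrArg Subtype.val hh
          simp only [negE_val] at this
          have := b.2.1; omega
        rw [if_neg this, mul_zero]
      · rw [if_neg h, zero_mul]
    · rfl
  rw [h1, h2, add_zero]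

lemma fexp_pr (r : ℕ) (b b' : JIdx r) (h : b ≠ b') :
    fexp r (pr r b b') = cL r b + 1 - cL r b' - (if b = negE r b' then 1 else 0) := by
  have hrw : pr r b b' = Finsupp.single b 1 + Finsupp.single b' (-1) := by
    rw [pr, sub_eq_add_neg, ← Finsupp.single_neg]
  rw [hrw, fexp_add, fexp_single, fexp_single, sum_single_negE_mul, sum_single_mul]
  have e1 : (Finsupp.single b 1 : JIdx r →₀ ℤ) b' = 0 := by
    rw [Finsupp.single_apply, if_neg h]
  have e2 : (Finsupp.single b 1 : JIdx r →₀ ℤ) (negE r b') = if b = negE r b' then 1 else 0 :=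
    Finsupp.single_apply
  rw [e1, e2]
  split <;> ring

lemma sexp_pr (r : ℕ) (b b' : JIdx r) : sexp r (pr r b b') = cL r b - cL r b' := by
  unfold sexp pr
  have : ∀ a : JIdx r, (Finsupp.single b 1 - Finsupp.single b' 1 : JIdx r →₀ ℤ) a * cL r a
      = (Finsupp.single b 1 : JIdx r →₀ ℤ) a * cL r a
        - (Finsupp.single b' 1 : JIdx r →₀ ℤ) a * cL r a := by
    intro a; rw [Finsupp.sub_apply, sub_mul]
  rw [Finset.sum_congr rfl fun a _ => this a, Finset.sum_sub_distrib,
    sum_single_mul, sum_single_mul, one_mul, one_mul]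

lemma BJ_eq (r : ℕ) (f g : JIdx r →₀ ℤ) : BJ r f g = ∑ a, f a * g a := by
  rw [BJ]
  exact Finsupp.sum_fintype _ _ fun a => zero_mul _

lemma BJ_pr (r : ℕ) (b b' : JIdx r) (g : JIdx r →₀ ℤ) :
    BJ r (pr r b b') g = g b - g b' := by
  rw [BJ_eq]; exact sum_pr_mul r b b' g

/-- Master lemma for the `i ≠ 0` cases. -/
lemma main_pair (r : ℕ) (b1 b2 m1 m2 : JIdx r) (h12 : b1 ≠ b2) (hm : m1 ≠ m2)
    (hne : b1 ≠ negE r b2) (hE1 : negE r b1 = m2) (hE2 : negE r b2 = m1)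
    (hcL : cL r b1 - cL r b2 = 1) (μ : JIdx r →₀ ℤ) :
    zetaF r (μ + pr r b1 b2)
      = -((RatFunc.X : RatFunc ℚ) ^ (BJ r (pr r b1 b2) (μ + pr r b1 b2) - BJ r (pr r m1 m2) μ))
        * zetaF r μ := by
  rw [zetaF_delta, sum_pr_mul, sum_pr_negE_mul, hE1, hE2]
  have hs : sexp r (pr r b1 b2) = 1 := by rw [sexp_pr, hcL]
  have hf : fexp r (pr r b1 b2) = 2 := by
    rw [fexp_pr r b1 b2 h12, if_neg hne]; omega
  have hBJ1 : BJ r (pr r b1 b2) (μ + pr r b1 b2) = μ b1 - μ b2 + 2 := by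
    rw [BJ_pr, Finsupp.add_apply, Finsupp.add_apply, pr_apply_self r b1 b2 h12]
    have : pr r b1 b2 b2 = -1 := by
      have h' : b1 ≠ b2 := h12
      simp [pr, Finsupp.single_apply, h']
    rw [this]; ring
  have hBJ2 : BJ r (pr r m1 m2) μ = μ m1 - μ m2 := BJ_pr r m1 m2 μ
  rw [hs, hf, hBJ1, hBJ2, zpow_one]
  have hexp : 2 + (μ b1 - μ b2) + (μ m2 - μ m1) = μ b1 - μ b2 + 2 - (μ m1 - μ m2) := by ring
  rw [hexp]
  ring

end Stmt11

open Stmt11 in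
/-- There exists a function `ζ : Λ → ℚ(q)ˣ` with `ζ(μ + α_0) = -q ζ(μ)` and
`ζ(μ + α_i) = -q^{(α_i, μ+α_i) - (α_{-i}, μ)} ζ(μ)` for all `μ ∈ Λ` and all `0 < |i| ≤ r`. -/
theorem stmt11 (r : ℕ) :
    ∃ ζ : (JIdx r →₀ ℤ) → RatFunc ℚ,
      (∀ μ, ζ μ ≠ 0) ∧
      (∀ μ, ζ (μ + alphaB r 0) = -(RatFunc.X : RatFunc ℚ) * ζ μ) ∧
      (∀ i : ℤ, i ≠ 0 → |i| ≤ (r : ℤ) → ∀ μ,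
        ζ (μ + alphaB r i)
          = -((RatFunc.X : RatFunc ℚ) ^
                (BJ r (alphaB r i) (μ + alphaB r i) - BJ r (alphaB r (-i)) μ)) * ζ μ) := by
  refine ⟨zetaF r, fun μ => mul_ne_zero (zpow_ne_zero _ (by norm_num))
    (zpow_ne_zero _ RatFunc.X_ne_zero), ?_, ?_⟩
  · -- α_0 case
    intro μ
    have hm1 : (-1 : ℤ) ≠ 0 ∧ -(r + 1 : ℤ) ≤ -1 ∧ (-1 : ℤ) ≤ (r : ℤ) + 1 := by
      refine ⟨by norm_num, by omega, by omega⟩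
    have hp1 : (1 : ℤ) ≠ 0 ∧ -(r + 1 : ℤ) ≤ 1 ∧ (1 : ℤ) ≤ (r : ℤ) + 1 := by
      refine ⟨by norm_num, by omega, by omega⟩
    set b1 : JIdx r := ⟨-1, hm1⟩
    set b2 : JIdx r := ⟨1, hp1⟩
    have hα : alphaB r 0 = pr r b1 b2 := by
      rw [alphaB, if_neg (by norm_num), if_neg (by norm_num), pr, eJ, dif_pos hm1, eJ, dif_pos hp1]
    have h12 : b1 ≠ b2 := by intro h; have := congrArg Subtype.val h; simp [b1, b2] at this
    rw [hα, zetaF_delta, sum_pr_mul, sum_pr_negE_mul]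
    have hE1 : negE r b1 = b2 := Subtype.ext (by simp only [negE_val]; try norm_num)
    have hE2 : negE r b2 = b1 := Subtype.ext (by simp only [negE_val]; try norm_num)
    have c1 : cL r b1 = 0 := by rw [cL_mk]; split_ifs <;> omega
    have c2 : cL r b2 = -1 := by rw [cL_mk]; split_ifs <;> omega
    have hs : sexp r (pr r b1 b2) = 1 := by
      rw [sexp_pr, c1, c2]; ring
    have hf : fexp r (pr r b1 b2) = 1 := by
      rw [fexp_pr r b1 b2 h12, if_pos hE2.symm, c1, c2]; ring
    rw [hE1, hE2, hs, hf]
    have : 1 + (μ b1 - μ b2) + (μ b2 - μ b1) = 1 := by ring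
    rw [this, zpow_one, zpow_one]
    ring
  · intro i hi hir μ
    rw [abs_le] at hir
    rcases lt_or_gt_of_ne hi with hneg | hpos
    · -- i < 0
      have h1 : (i - 1 : ℤ) ≠ 0 ∧ -(r + 1 : ℤ) ≤ i - 1 ∧ (i - 1 : ℤ) ≤ (r : ℤ) + 1 :=
        ⟨by omega, by omega, by omega⟩
      have h2 : (i : ℤ) ≠ 0 ∧ -(r + 1 : ℤ) ≤ i ∧ (i : ℤ) ≤ (r : ℤ) + 1 :=
        ⟨hi, by omega, by omega⟩
      have h3 : (-i : ℤ) ≠ 0 ∧ -(r + 1 : ℤ) ≤ -i ∧ (-i : ℤ) ≤ (r : ℤ) + 1 :=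
        ⟨by omega, by omega, by omega⟩
      have h4 : (-i + 1 : ℤ) ≠ 0 ∧ -(r + 1 : ℤ) ≤ -i + 1 ∧ (-i + 1 : ℤ) ≤ (r : ℤ) + 1 :=
        ⟨by omega, by omega, by omega⟩
      have hα : alphaB r i = pr r ⟨i - 1, h1⟩ ⟨i, h2⟩ := by
        rw [alphaB, if_neg (by omega), if_pos hneg, pr, eJ, dif_pos h1, eJ, dif_pos h2]
      have hαm : alphaB r (-i) = pr r ⟨-i, h3⟩ ⟨-i + 1, h4⟩ := by
        rw [alphaB, if_pos (by omega), pr, eJ, dif_pos h3, eJ, dif_pos h4]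
      rw [hα, hαm]
      refine main_pair r ⟨i - 1, h1⟩ ⟨i, h2⟩ ⟨-i, h3⟩ ⟨-i + 1, h4⟩ ?_ ?_ ?_ ?_ ?_ ?_ μ
      · simp only [ne_eq, Subtype.mk.injEq]; omega
      · simp only [ne_eq, Subtype.mk.injEq]; omega
      · intro h
        have := congrArg Subtype.val h
        simp only [negE_val] at this
        omega
      · exact Subtype.ext (by simp only [negE_val]; try omega)
      · exact Subtype.ext (by simp only [negE_val]; try omega)
      · rw [cL_mk, cL_mk]; split_ifs <;> omega
    · -- i > 0
      have h1 : (i : ℤ) ≠ 0 ∧ -(r + 1 : ℤ) ≤ i ∧ (i : ℤ) ≤ (r : ℤ) + 1 :=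
        ⟨hi, by omega, by omega⟩
      have h2 : (i + 1 : ℤ) ≠ 0 ∧ -(r + 1 : ℤ) ≤ i + 1 ∧ (i + 1 : ℤ) ≤ (r : ℤ) + 1 :=
        ⟨by omega, by omega, by omega⟩
      have h3 : (-i - 1 : ℤ) ≠ 0 ∧ -(r + 1 : ℤ) ≤ -i - 1 ∧ (-i - 1 : ℤ) ≤ (r : ℤ) + 1 :=
        ⟨by omega, by omega, by omega⟩
      have h4 : (-i : ℤ) ≠ 0 ∧ -(r + 1 : ℤ) ≤ -i ∧ (-i : ℤ) ≤ (r : ℤ) + 1 :=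
        ⟨by omega, by omega, by omega⟩
      have hα : alphaB r i = pr r ⟨i, h1⟩ ⟨i + 1, h2⟩ := by
        rw [alphaB, if_pos hpos, pr, eJ, dif_pos h1, eJ, dif_pos h2]
      have hαm : alphaB r (-i) = pr r ⟨-i - 1, h3⟩ ⟨-i, h4⟩ := by
        rw [alphaB, if_neg (by omega), if_pos (by omega), pr, eJ, dif_pos h3, eJ, dif_pos h4]
      rw [hα, hαm]
      refine main_pair r ⟨i, h1⟩ ⟨i + 1, h2⟩ ⟨-i - 1, h3⟩ ⟨-i, h4⟩ ?_ ?_ ?_ ?_ ?_ ?_ μ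
      · simp only [ne_eq, Subtype.mk.injEq]; omega
      · simp only [ne_eq, Subtype.mk.injEq]; omega
      · intro h
        have := congrArg Subtype.val h
        simp only [negE_val] at this
        omega
      · exact Subtype.ext (by simp only [negE_val]; try omega)
      · exact Subtype.ext (by simp only [negE_val]; try omega)
      · rw [cL_mk, cL_mk]; split_ifs <;> omega
end

section
/- Let A be the associative ℚ(q)-algebra U^ı presented by generators e_i, f_i, k_i^{±1} (i = 1,…,r) and t, with relations: k_i k_i^{-1} = 1; the k_i commute; k_i e_j k_i^{-1} = q^{(α_i - α_{-i}, α_j)} e_j; k_i f_j k_i^{-1} = q^{-(α_i - α_{-i}, α_j)} f_j; k_i t = t k_i; e_i f_j - f_j e_i = δ_{ij}(k_i - k_i^{-1})/(q - q^{-1}); quantum Serre relations among the e's and among the f's; e_i t = t e_i and f_i t = t f_i for i > 1; e_1² t + t e_1² = (q+q^{-1}) e_1 t e_1; t² e_1 + e_1 t² = (q+q^{-1}) t e_1 t + e_1; f_1² t + t f_1² = (q+q^{-1}) f_1 t f_1; t² f_1 + f_1 t² = (q+q^{-1}) t f_1 t + f_1. Then there exists a ℚ-algebra involution ψ_ı of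 A which is antilinear in the sense ψ_ı(q) = q^{-1}, and satisfies ψ_ı(e_i) = e_i, ψ_ı(f_i) = f_i, ψ_ı(t) = t, ψ_ı(k_i) = k_i^{-1}. -/
noncomputable section

/- The coideal algebra `U^ı` of rank `r`, presented by generators
`e_{α_i}, f_{α_i}, k_{α_i}^{±1}` (`i = 1,…,r`, recorded as `i : Fin r` with label `i+1`) and `t`,
subject to the listed relations.  Here `(α_i - α_{-i}, α_j) = 2` if `j = i`, `-1` if
`|i - j| = 1` and `0` otherwise. -/

/-- Generators of `U^ı`. -/
inductive UGen (r : ℕ)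
  | e : Fin r → UGen r
  | f : Fin r → UGen r
  | k : Fin r → UGen r
  | kinv : Fin r → UGen r
  | t : UGen r

/-- The free `ℚ(q)`-algebra on the generators. -/
abbrev FA (r : ℕ) := FreeAlgebra (RatFunc ℚ) (UGen r)

def ge (r : ℕ) (i : Fin r) : FA r := FreeAlgebra.ι _ (UGen.e i)
def gf (r : ℕ) (i : Fin r) : FA r := FreeAlgebra.ι _ (UGen.f i)
def gk (r : ℕ) (i : Fin r) : FA r := FreeAlgebra.ι _ (UGen.k i)
def gki (r : ℕ) (i : Fin r) : FA r := FreeAlgebra.ι _ (UGen.kinv i)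
def gt (r : ℕ) : FA r := FreeAlgebra.ι _ UGen.t

/-- The integers `(α_i - α_{-i}, α_j)`. -/
def cc {r : ℕ} (i j : Fin r) : ℤ :=
  if i = j then 2 else if ((i : ℤ) - (j : ℤ)).natAbs = 1 then -1 else 0

/-- The defining relations of `U^ı`. -/
inductive URel (r : ℕ) : FA r → FA r → Prop
  | kki (i : Fin r) : URel r (gk r i * gki r i) 1
  | kik (i : Fin r) : URel r (gki r i * gk r i) 1
  | kk (i j : Fin r) : URel r (gk r i * gk r j) (gk r j * gk r i)
  | ke (i j : Fin r) :
      URel r (gk r i * ge r j * gki r i) (((RatFunc.X : RatFunc ℚ) ^ cc i j) • ge r j)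
  | kf (i j : Fin r) :
      URel r (gk r i * gf r j * gki r i) (((RatFunc.X : RatFunc ℚ) ^ (-cc i j)) • gf r j)
  | kt (i : Fin r) : URel r (gk r i * gt r * gki r i) (gt r)
  | ef (i j : Fin r) :
      URel r (ge r i * gf r j - gf r j * ge r i)
        (if i = j then
          ((RatFunc.X : RatFunc ℚ) - (RatFunc.X : RatFunc ℚ)⁻¹)⁻¹ • (gk r i - gki r i)
         else 0)
  | serre_e1 (i j : Fin r) (h : ((i : ℤ) - (j : ℤ)).natAbs = 1) :
      URel r (ge r i ^ 2 * ge r j + ge r j * ge r i ^ 2)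
        (((RatFunc.X : RatFunc ℚ) + (RatFunc.X : RatFunc ℚ)⁻¹) • (ge r i * ge r j * ge r i))
  | serre_e2 (i j : Fin r) (h : 1 < ((i : ℤ) - (j : ℤ)).natAbs) :
      URel r (ge r i * ge r j) (ge r j * ge r i)
  | serre_f1 (i j : Fin r) (h : ((i : ℤ) - (j : ℤ)).natAbs = 1) :
      URel r (gf r i ^ 2 * gf r j + gf r j * gf r i ^ 2)
        (((RatFunc.X : RatFunc ℚ) + (RatFunc.X : RatFunc ℚ)⁻¹) • (gf r i * gf r j * gf r i))
  | serre_f2 (i j : Fin r) (h : 1 < ((i : ℤ) - (j : ℤ)).natAbs) :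
      URel r (gf r i * gf r j) (gf r j * gf r i)
  | et (i : Fin r) (h : 0 < (i : ℕ)) : URel r (ge r i * gt r) (gt r * ge r i)
  | ft (i : Fin r) (h : 0 < (i : ℕ)) : URel r (gf r i * gt r) (gt r * gf r i)
  | e1t (h1 : 0 < r) :
      URel r (ge r ⟨0, h1⟩ ^ 2 * gt r + gt r * ge r ⟨0, h1⟩ ^ 2)
        (((RatFunc.X : RatFunc ℚ) + (RatFunc.X : RatFunc ℚ)⁻¹) •
          (ge r ⟨0, h1⟩ * gt r * ge r ⟨0, h1⟩))
  | te1 (h1 : 0 < r) :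
      URel r (gt r ^ 2 * ge r ⟨0, h1⟩ + ge r ⟨0, h1⟩ * gt r ^ 2)
        (((RatFunc.X : RatFunc ℚ) + (RatFunc.X : RatFunc ℚ)⁻¹) •
          (gt r * ge r ⟨0, h1⟩ * gt r) + ge r ⟨0, h1⟩)
  | f1t (h1 : 0 < r) :
      URel r (gf r ⟨0, h1⟩ ^ 2 * gt r + gt r * gf r ⟨0, h1⟩ ^ 2)
        (((RatFunc.X : RatFunc ℚ) + (RatFunc.X : RatFunc ℚ)⁻¹) •
          (gf r ⟨0, h1⟩ * gt r * gf r ⟨0, h1⟩))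
  | tf1 (h1 : 0 < r) :
      URel r (gt r ^ 2 * gf r ⟨0, h1⟩ + gf r ⟨0, h1⟩ * gt r ^ 2)
        (((RatFunc.X : RatFunc ℚ) + (RatFunc.X : RatFunc ℚ)⁻¹) •
          (gt r * gf r ⟨0, h1⟩ * gt r) + gf r ⟨0, h1⟩)

/-- The coideal algebra `U^ı`, as the quotient of the free algebra by the relations. -/
abbrev UAlg (r : ℕ) := RingQuot (URel r)

def uE (r : ℕ) (i : Fin r) : UAlg r := RingQuot.mkAlgHom (RatFunc ℚ) (URel r) (ge r i)
def uF (r : ℕ) (i : Fin r) : UAlg r := RingQuot.mkAlgHom (RatFunc ℚ) (URel r) (gf r i)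
def uK (r : ℕ) (i : Fin r) : UAlg r := RingQuot.mkAlgHom (RatFunc ℚ) (URel r) (gk r i)
def uKi (r : ℕ) (i : Fin r) : UAlg r := RingQuot.mkAlgHom (RatFunc ℚ) (URel r) (gki r i)
def uT (r : ℕ) : UAlg r := RingQuot.mkAlgHom (RatFunc ℚ) (URel r) (gt r)



/-- target of the bar map on generators -/
def tgt (r : ℕ) : UGen r → UAlg r
  | .e i => uE r i
  | .f i => uF r i
  | .k i => uKi r i
  | .kinv i => uK r i
  | .t => uT r

lemma uKKi (r : ℕ) (i : Fin r) : uK r i * uKi r i = 1 := by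
  have := RingQuot.mkAlgHom_rel (RatFunc ℚ) (URel.kki i)
  simpa [uK, uKi, map_mul] using this

lemma uKiK (r : ℕ) (i : Fin r) : uKi r i * uK r i = 1 := by
  have := RingQuot.mkAlgHom_rel (RatFunc ℚ) (URel.kik i)
  simpa [uK, uKi, map_mul] using this

lemma uKi_conj (r : ℕ) (i : Fin r) (a b : UAlg r) (h : uK r i * a * uKi r i = b) :
    uKi r i * b * uK r i = a := by
  rw [← h]
  calc uKi r i * (uK r i * a * uKi r i) * uK r i
      = (uKi r i * uK r i) * a * (uKi r i * uK r i) := by noncomm_ring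
    _ = a := by rw [uKiK]; rw [one_mul, mul_one]

lemma uKiComm (r : ℕ) (i j : Fin r) : uKi r i * uKi r j = uKi r j * uKi r i := by
  have hkk : uK r i * uK r j = uK r j * uK r i := by
    have := RingQuot.mkAlgHom_rel (RatFunc ℚ) (URel.kk i j)
    simpa [uK, map_mul] using this
  have h1 : (uK r i * uK r j) * (uKi r j * uKi r i) = 1 := by
    calc (uK r i * uK r j) * (uKi r j * uKi r i)
        = uK r i * (uK r j * uKi r j) * uKi r i := by noncomm_ring
      _ = 1 := by rw [uKKi, mul_one, uKKi]
  have h2 : (uKi r i * uKi r j) * (uK r i * uK r j) = 1 := by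
    rw [hkk]
    calc (uKi r i * uKi r j) * (uK r j * uK r i)
        = uKi r i * (uKi r j * uK r j) * uK r i := by noncomm_ring
      _ = 1 := by rw [uKiK, mul_one, uKiK]
  calc uKi r i * uKi r j
      = (uKi r i * uKi r j) * ((uK r i * uK r j) * (uKi r j * uKi r i)) := by
        rw [h1, mul_one]
    _ = ((uKi r i * uKi r j) * (uK r i * uK r j)) * (uKi r j * uKi r i) := by
        noncomm_ring
    _ = uKi r j * uKi r i := by rw [h2, one_mul]

lemma Xzpow_ne (n : ℤ) : (RatFunc.X : RatFunc ℚ) ^ n ≠ 0 :=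
  zpow_ne_zero _ RatFunc.X_ne_zero

lemma conj_smul (r : ℕ) (i : Fin r) (a : UAlg r) (c : RatFunc ℚ) (hc : c ≠ 0)
    (h : uK r i * a * uKi r i = c • a) : uKi r i * a * uK r i = c⁻¹ • a := by
  have h2 : uKi r i * (c • a) * uK r i = a := uKi_conj r i a _ h
  rw [mul_smul_comm, smul_mul_assoc] at h2
  conv_rhs => rw [← h2]
  rw [smul_smul, inv_mul_cancel₀ hc, one_smul]

lemma uKiEK (r : ℕ) (i j : Fin r) :
    uKi r i * uE r j * uK r i = ((RatFunc.X : RatFunc ℚ) ^ (-cc i j)) • uE r j := by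
  have h := RingQuot.mkAlgHom_rel (RatFunc ℚ) (URel.ke i j)
  simp only [map_mul, map_smul] at h
  have := conj_smul r i (uE r j) _ (Xzpow_ne _) h
  rwa [← zpow_neg] at this

lemma uKiFK (r : ℕ) (i j : Fin r) :
    uKi r i * uF r j * uK r i = ((RatFunc.X : RatFunc ℚ) ^ (cc i j)) • uF r j := by
  have h := RingQuot.mkAlgHom_rel (RatFunc ℚ) (URel.kf i j)
  simp only [map_mul, map_smul] at h
  have := conj_smul r i (uF r j) _ (Xzpow_ne _) h
  rwa [← zpow_neg, neg_neg] at this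

lemma uKiTK (r : ℕ) (i : Fin r) : uKi r i * uT r * uK r i = uT r := by
  have h := RingQuot.mkAlgHom_rel (RatFunc ℚ) (URel.kt i)
  simp only [map_mul] at h
  exact uKi_conj r i (uT r) _ h


variable {r : ℕ}

lemma sig_zpow (σ : RatFunc ℚ →+* RatFunc ℚ) (hσ : σ RatFunc.X = (RatFunc.X : RatFunc ℚ)⁻¹)
    (n : ℤ) : σ ((RatFunc.X : RatFunc ℚ) ^ n) = (RatFunc.X : RatFunc ℚ) ^ (-n) := by
  rw [map_zpow₀, hσ, inv_zpow, ← zpow_neg]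

lemma sig_qq (σ : RatFunc ℚ →+* RatFunc ℚ) (hσ : σ RatFunc.X = (RatFunc.X : RatFunc ℚ)⁻¹) :
    σ ((RatFunc.X : RatFunc ℚ) + (RatFunc.X : RatFunc ℚ)⁻¹)
    = (RatFunc.X : RatFunc ℚ) + (RatFunc.X : RatFunc ℚ)⁻¹ := by
  rw [map_add, hσ, map_inv₀, hσ, inv_inv, add_comm]

lemma sig_qi (σ : RatFunc ℚ →+* RatFunc ℚ) (hσ : σ RatFunc.X = (RatFunc.X : RatFunc ℚ)⁻¹) :
    σ (((RatFunc.X : RatFunc ℚ) - (RatFunc.X : RatFunc ℚ)⁻¹)⁻¹)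
    = -((RatFunc.X : RatFunc ℚ) - (RatFunc.X : RatFunc ℚ)⁻¹)⁻¹ := by
  rw [map_inv₀, map_sub, hσ, map_inv₀, hσ, inv_inv, ← neg_sub, inv_neg]

lemma sig_sq (σ : RatFunc ℚ →+* RatFunc ℚ) (hσ : σ RatFunc.X = (RatFunc.X : RatFunc ℚ)⁻¹)
    (c : RatFunc ℚ) : σ (σ c) = c := by
  have hX : σ (σ (RatFunc.X : RatFunc ℚ)) = RatFunc.X := by
    rw [hσ, map_inv₀, hσ, inv_inv]
  have hp : ∀ p : Polynomial ℚ,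
      σ (σ (algebraMap (Polynomial ℚ) (RatFunc ℚ) p)) = algebraMap _ _ p := by
    intro p
    induction p using Polynomial.induction_on' with
    | add p q hp hq => rw [map_add, map_add, map_add, hp, hq]
    | monomial n a =>
        rw [← Polynomial.C_mul_X_pow_eq_monomial]
        have hC : algebraMap (Polynomial ℚ) (RatFunc ℚ) (Polynomial.C a) = (a : RatFunc ℚ) :=
          eq_ratCast ((algebraMap (Polynomial ℚ) (RatFunc ℚ)).comp Polynomial.C) a
        simp only [map_mul, map_pow, hC, map_ratCast, RatFunc.algebraMap_X, hX]
  induction c using RatFunc.induction_on with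
  | f p q hq => rw [map_div₀, map_div₀, hp, hp]

/-- the twisted algebra structure -/
def twAlg (r : ℕ) (σ : RatFunc ℚ →+* RatFunc ℚ) : Algebra (RatFunc ℚ) (UAlg r) :=
  RingHom.toAlgebra' ((algebraMap (RatFunc ℚ) (UAlg r)).comp σ)
    (fun c x => Algebra.commutes (σ c) x)

def phi0 (r : ℕ) (σ : RatFunc ℚ →+* RatFunc ℚ) : FA r →+* UAlg r :=
  letI := twAlg r σ
  (FreeAlgebra.lift (RatFunc ℚ) (tgt r) : FA r →ₐ[RatFunc ℚ] UAlg r).toRingHom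

lemma phi0_ι (r : ℕ) (σ : RatFunc ℚ →+* RatFunc ℚ) (g : UGen r) :
    phi0 r σ (FreeAlgebra.ι _ g) = tgt r g := by
  letI := twAlg r σ
  exact FreeAlgebra.lift_ι_apply (tgt r) g

lemma phi0_alg (r : ℕ) (σ : RatFunc ℚ →+* RatFunc ℚ) (c : RatFunc ℚ) :
    phi0 r σ (algebraMap (RatFunc ℚ) (FA r) c) = algebraMap (RatFunc ℚ) (UAlg r) (σ c) := by
  letI := twAlg r σ
  exact (FreeAlgebra.lift (RatFunc ℚ) (tgt r) : FA r →ₐ[RatFunc ℚ] UAlg r).commutes c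
lemma phi0_smul (r : ℕ) (σ : RatFunc ℚ →+* RatFunc ℚ) (c : RatFunc ℚ) (x : FA r) :
    phi0 r σ (c • x) = σ c • phi0 r σ x := by
  rw [Algebra.smul_def, map_mul, phi0_alg, Algebra.smul_def]

lemma phi0_e (r : ℕ) (σ : RatFunc ℚ →+* RatFunc ℚ) (i : Fin r) :
    phi0 r σ (ge r i) = uE r i := phi0_ι r σ _
lemma phi0_f (r : ℕ) (σ : RatFunc ℚ →+* RatFunc ℚ) (i : Fin r) :
    phi0 r σ (gf r i) = uF r i := phi0_ι r σ _
lemma phi0_k (r : ℕ) (σ : RatFunc ℚ →+* RatFunc ℚ) (i : Fin r) :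
    phi0 r σ (gk r i) = uKi r i := phi0_ι r σ _
lemma phi0_ki (r : ℕ) (σ : RatFunc ℚ →+* RatFunc ℚ) (i : Fin r) :
    phi0 r σ (gki r i) = uK r i := phi0_ι r σ _
lemma phi0_t (r : ℕ) (σ : RatFunc ℚ →+* RatFunc ℚ) :
    phi0 r σ (gt r) = uT r := phi0_ι r σ _

local notation "XX" => (RatFunc.X : RatFunc ℚ)

lemma uEF (r : ℕ) (i j : Fin r) :
    uE r i * uF r j - uF r j * uE r i
      = if i = j then (XX - XX⁻¹)⁻¹ • (uK r i - uKi r i) else 0 := by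
  have h := RingQuot.mkAlgHom_rel (RatFunc ℚ) (URel.ef i j)
  by_cases hij : i = j <;>
    simp only [hij, if_true, if_false, ite_true, ite_false] at h ⊢ <;>
    simpa [uE, uF, uK, uKi, map_sub, map_mul, map_smul, map_zero] using h

lemma uSE1 (r : ℕ) (i j : Fin r) (h : ((i : ℤ) - (j : ℤ)).natAbs = 1) :
    uE r i ^ 2 * uE r j + uE r j * uE r i ^ 2
      = (XX + XX⁻¹) • (uE r i * uE r j * uE r i) := by
  have h2 := RingQuot.mkAlgHom_rel (RatFunc ℚ) (URel.serre_e1 i j h)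
  simpa [uE, map_mul, map_add, map_pow, map_smul] using h2

lemma uSE2 (r : ℕ) (i j : Fin r) (h : 1 < ((i : ℤ) - (j : ℤ)).natAbs) :
    uE r i * uE r j = uE r j * uE r i := by
  have h2 := RingQuot.mkAlgHom_rel (RatFunc ℚ) (URel.serre_e2 i j h)
  simpa [uE, map_mul] using h2

lemma uSF1 (r : ℕ) (i j : Fin r) (h : ((i : ℤ) - (j : ℤ)).natAbs = 1) :
    uF r i ^ 2 * uF r j + uF r j * uF r i ^ 2
      = (XX + XX⁻¹) • (uF r i * uF r j * uF r i) := by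
  have h2 := RingQuot.mkAlgHom_rel (RatFunc ℚ) (URel.serre_f1 i j h)
  simpa [uF, map_mul, map_add, map_pow, map_smul] using h2

lemma uSF2 (r : ℕ) (i j : Fin r) (h : 1 < ((i : ℤ) - (j : ℤ)).natAbs) :
    uF r i * uF r j = uF r j * uF r i := by
  have h2 := RingQuot.mkAlgHom_rel (RatFunc ℚ) (URel.serre_f2 i j h)
  simpa [uF, map_mul] using h2

lemma uET (r : ℕ) (i : Fin r) (h : 0 < (i : ℕ)) : uE r i * uT r = uT r * uE r i := by
  have h2 := RingQuot.mkAlgHom_rel (RatFunc ℚ) (URel.et i h)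
  simpa [uE, uT, map_mul] using h2

lemma uFT (r : ℕ) (i : Fin r) (h : 0 < (i : ℕ)) : uF r i * uT r = uT r * uF r i := by
  have h2 := RingQuot.mkAlgHom_rel (RatFunc ℚ) (URel.ft i h)
  simpa [uF, uT, map_mul] using h2

lemma uE1T (r : ℕ) (h1 : 0 < r) :
    uE r ⟨0, h1⟩ ^ 2 * uT r + uT r * uE r ⟨0, h1⟩ ^ 2
      = (XX + XX⁻¹) • (uE r ⟨0, h1⟩ * uT r * uE r ⟨0, h1⟩) := by
  have h2 := RingQuot.mkAlgHom_rel (RatFunc ℚ) (URel.e1t h1)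
  simpa [uE, uT, map_mul, map_add, map_pow, map_smul] using h2

lemma uTE1 (r : ℕ) (h1 : 0 < r) :
    uT r ^ 2 * uE r ⟨0, h1⟩ + uE r ⟨0, h1⟩ * uT r ^ 2
      = (XX + XX⁻¹) • (uT r * uE r ⟨0, h1⟩ * uT r) + uE r ⟨0, h1⟩ := by
  have h2 := RingQuot.mkAlgHom_rel (RatFunc ℚ) (URel.te1 h1)
  simpa [uE, uT, map_mul, map_add, map_pow, map_smul] using h2

lemma uF1T (r : ℕ) (h1 : 0 < r) :
    uF r ⟨0, h1⟩ ^ 2 * uT r + uT r * uF r ⟨0, h1⟩ ^ 2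
      = (XX + XX⁻¹) • (uF r ⟨0, h1⟩ * uT r * uF r ⟨0, h1⟩) := by
  have h2 := RingQuot.mkAlgHom_rel (RatFunc ℚ) (URel.f1t h1)
  simpa [uF, uT, map_mul, map_add, map_pow, map_smul] using h2

lemma uTF1 (r : ℕ) (h1 : 0 < r) :
    uT r ^ 2 * uF r ⟨0, h1⟩ + uF r ⟨0, h1⟩ * uT r ^ 2
      = (XX + XX⁻¹) • (uT r * uF r ⟨0, h1⟩ * uT r) + uF r ⟨0, h1⟩ := by
  have h2 := RingQuot.mkAlgHom_rel (RatFunc ℚ) (URel.tf1 h1)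
  simpa [uF, uT, map_mul, map_add, map_pow, map_smul] using h2

lemma phi0_rel (r : ℕ) (σ : RatFunc ℚ →+* RatFunc ℚ)
    (hσ : σ RatFunc.X = (RatFunc.X : RatFunc ℚ)⁻¹) :
    ∀ ⦃x y : FA r⦄, URel r x y → phi0 r σ x = phi0 r σ y := by
  intro x y h
  induction h with
  | kki i =>
      simp only [map_mul, map_one, phi0_k, phi0_ki]; exact uKiK r i
  | kik i =>
      simp only [map_mul, map_one, phi0_k, phi0_ki]; exact uKKi r i
  | kk i j =>
      simp only [map_mul, phi0_k]; exact uKiComm r i j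
  | ke i j =>
      simp only [map_mul, phi0_k, phi0_ki, phi0_e, phi0_smul]
      rw [sig_zpow σ hσ]; exact uKiEK r i j
  | kf i j =>
      simp only [map_mul, phi0_k, phi0_ki, phi0_f, phi0_smul]
      rw [sig_zpow σ hσ, neg_neg]; exact uKiFK r i j
  | kt i =>
      simp only [map_mul, phi0_k, phi0_ki, phi0_t]; exact uKiTK r i
  | ef i j =>
      rw [map_sub, map_mul, map_mul, phi0_e, phi0_f, uEF r i j]
      by_cases hij : i = j
      · rw [if_pos hij, if_pos hij, phi0_smul, map_sub, phi0_k, phi0_ki, sig_qi σ hσ]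
        simp only [smul_sub, neg_smul]; abel
      · rw [if_neg hij, if_neg hij, map_zero]
  | serre_e1 i j h =>
      simp only [map_mul, map_add, map_pow, phi0_e, phi0_smul]
      rw [hσ, map_inv₀, hσ, inv_inv, add_comm ((RatFunc.X : RatFunc ℚ)⁻¹) RatFunc.X]
      exact uSE1 r i j h
  | serre_e2 i j h =>
      simp only [map_mul, phi0_e]; exact uSE2 r i j h
  | serre_f1 i j h =>
      simp only [map_mul, map_add, map_pow, phi0_f, phi0_smul]
      rw [hσ, map_inv₀, hσ, inv_inv, add_comm ((RatFunc.X : RatFunc ℚ)⁻¹) RatFunc.X]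
      exact uSF1 r i j h
  | serre_f2 i j h =>
      simp only [map_mul, phi0_f]; exact uSF2 r i j h
  | et i h =>
      simp only [map_mul, phi0_e, phi0_t]; exact uET r i h
  | ft i h =>
      simp only [map_mul, phi0_f, phi0_t]; exact uFT r i h
  | e1t h1 =>
      simp only [map_mul, map_add, map_pow, phi0_e, phi0_t, phi0_smul]
      rw [hσ, map_inv₀, hσ, inv_inv, add_comm ((RatFunc.X : RatFunc ℚ)⁻¹) RatFunc.X]
      exact uE1T r h1
  | te1 h1 =>
      simp only [map_mul, map_add, map_pow, phi0_e, phi0_t, phi0_smul]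
      rw [hσ, map_inv₀, hσ, inv_inv, add_comm ((RatFunc.X : RatFunc ℚ)⁻¹) RatFunc.X]
      exact uTE1 r h1
  | f1t h1 =>
      simp only [map_mul, map_add, map_pow, phi0_f, phi0_t, phi0_smul]
      rw [hσ, map_inv₀, hσ, inv_inv, add_comm ((RatFunc.X : RatFunc ℚ)⁻¹) RatFunc.X]
      exact uF1T r h1
  | tf1 h1 =>
      simp only [map_mul, map_add, map_pow, phi0_f, phi0_t, phi0_smul]
      rw [hσ, map_inv₀, hσ, inv_inv, add_comm ((RatFunc.X : RatFunc ℚ)⁻¹) RatFunc.X]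
      exact uTF1 r h1

/-- `U^ı` admits a bar involution:  a ring endomorphism `ψ_ı`, antilinear over the field
automorphism `σ` of `ℚ(q)` determined by `σ(q) = q⁻¹`, which is an involution and fixes
`e_{α_i}`, `f_{α_i}`, `t`, and sends `k_{α_i} ↦ k_{α_i}⁻¹`. -/
theorem stmt18 (r : ℕ)
    (σ : RatFunc ℚ →+* RatFunc ℚ) (hσ : σ RatFunc.X = (RatFunc.X : RatFunc ℚ)⁻¹) :
    ∃ ψ : UAlg r →+* UAlg r,
      (∀ c : RatFunc ℚ,
        ψ (algebraMap (RatFunc ℚ) (UAlg r) c) = algebraMap (RatFunc ℚ) (UAlg r) (σ c)) ∧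
      (∀ x, ψ (ψ x) = x) ∧
      (∀ i, ψ (uE r i) = uE r i) ∧
      (∀ i, ψ (uF r i) = uF r i) ∧
      ψ (uT r) = uT r ∧
      (∀ i, ψ (uK r i) = uKi r i) ∧
      (∀ i, ψ (uKi r i) = uK r i) := by
  classical
  set ψ : UAlg r →+* UAlg r := RingQuot.lift ⟨phi0 r σ, phi0_rel r σ hσ⟩ with hψdef
  have hmk : ∀ x : FA r, ψ (RingQuot.mkRingHom (URel r) x) = phi0 r σ x := fun x =>
    RingQuot.lift_mkRingHom_apply (phi0 r σ) (phi0_rel r σ hσ) x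
  have key : ∀ x : FA r,
      RingQuot.mkAlgHom (RatFunc ℚ) (URel r) x = RingQuot.mkRingHom (URel r) x := fun x =>
    RingHom.congr_fun (RingQuot.mkAlgHom_coe (RatFunc ℚ) (URel r)) x
  have hmk' : ∀ x : FA r, ψ (RingQuot.mkAlgHom (RatFunc ℚ) (URel r) x) = phi0 r σ x := by
    intro x; rw [key, hmk]
  have hE : ∀ i, ψ (uE r i) = uE r i := by
    intro i; rw [uE, hmk', phi0_e]; rfl
  have hF : ∀ i, ψ (uF r i) = uF r i := by
    intro i; rw [uF, hmk', phi0_f]; rfl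
  have hK : ∀ i, ψ (uK r i) = uKi r i := by
    intro i; rw [uK, hmk', phi0_k]
  have hKi : ∀ i, ψ (uKi r i) = uK r i := by
    intro i; rw [uKi, hmk', phi0_ki]
  have hT : ψ (uT r) = uT r := by
    rw [uT, hmk', phi0_t]; rfl
  have halg : ∀ c : RatFunc ℚ,
      ψ (algebraMap (RatFunc ℚ) (UAlg r) c) = algebraMap (RatFunc ℚ) (UAlg r) (σ c) := by
    intro c
    rw [← (RingQuot.mkAlgHom (RatFunc ℚ) (URel r)).commutes c, hmk', phi0_alg]
  have hinv : ∀ x, ψ (ψ x) = x := by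
    intro x
    obtain ⟨a, rfl⟩ := RingQuot.mkRingHom_surjective (URel r) x
    refine FreeAlgebra.induction (RatFunc ℚ) (UGen r) ?_ ?_ ?_ ?_ a
    · intro c
      have e1 : RingQuot.mkRingHom (URel r) (algebraMap (RatFunc ℚ) (FA r) c)
          = algebraMap (RatFunc ℚ) (UAlg r) c := by
        rw [← key]; exact (RingQuot.mkAlgHom (RatFunc ℚ) (URel r)).commutes c
      rw [e1, halg, halg, sig_sq σ hσ]
    · intro g
      cases g with
      | e i =>
          have e1 : RingQuot.mkRingHom (URel r) (FreeAlgebra.ι _ (UGen.e i)) = uE r i := by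
            rw [uE, key]; rfl
          rw [e1, hE, hE]
      | f i =>
          have e1 : RingQuot.mkRingHom (URel r) (FreeAlgebra.ι _ (UGen.f i)) = uF r i := by
            rw [uF, key]; rfl
          rw [e1, hF, hF]
      | k i =>
          have e1 : RingQuot.mkRingHom (URel r) (FreeAlgebra.ι _ (UGen.k i)) = uK r i := by
            rw [uK, key]; rfl
          rw [e1, hK, hKi]
      | kinv i =>
          have e1 : RingQuot.mkRingHom (URel r) (FreeAlgebra.ι _ (UGen.kinv i)) = uKi r i := by
            rw [uKi, key]; rfl
          rw [e1, hKi, hK]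
      | t =>
          have e1 : RingQuot.mkRingHom (URel r) (FreeAlgebra.ι _ UGen.t) = uT r := by
            rw [uT, key]; rfl
          rw [e1, hT, hT]
    · intro a b ha hb
      simp only [map_mul, ha, hb]
    · intro a b ha hb
      simp only [map_add, ha, hb]
  exact ⟨ψ, halg, hinv, hE, hF, hT, hK, hKi⟩


end
end
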